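/- Let G : ℝ^d → ℝ be differentiable with an L-Lipschitz gradient on ℝ^d, let δ > 0, y ∈ ℝ^d, and K ≥ 1. Then, averaging over (r_1, …, r_K) uniform on ({−1, +1}^d)^K, E ‖(1/K) Σ_{k=1}^K ((G(y + δr_k) − G(y − δr_k))/(2δ)) · r_k − ∇G(y)‖² ≤ 2 · ((d − 1)/K) · ‖∇G(y)‖² + (L² δ² d³) / 2. -/

import Mathlib

/-- The sign vector in `{-1,+1}^d ⊆ ℝ^d` encoded by a Boolean vector. -/
noncomputable def signVec (d : ℕ) (s : Fin d → Bool) : EuclideanSpace ℝ (Fin d) :=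
  WithLp.toLp 2 (fun i => if s i then (1 : ℝ) else -1)

lemma signVec_apply (d : ℕ) (s : Fin d → Bool) (i : Fin d) :
    signVec d s i = if s i then 1 else -1 := rfl

lemma signVec_sq (d : ℕ) (s : Fin d → Bool) (i : Fin d) :
    signVec d s i * signVec d s i = 1 := by
  rw [signVec_apply]; rcases s i <;> norm_num

lemma sum_sign_mul (d : ℕ) (i j : Fin d) :
    ∑ s : Fin d → Bool, signVec d s i * signVec d s j
      = if i = j then (2:ℝ)^d else 0 := by
  rcases eq_or_ne i j with rfl | hij
  · simp [signVec_sq, Finset.card_univ]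
  · simp only [if_neg hij]
    have key : ∀ s : Fin d → Bool, signVec d s i * signVec d s j
        = ∏ m : Fin d, (if m = i ∨ m = j then (if s m then (1:ℝ) else -1) else 1) := by
      intro s
      rw [← Finset.prod_subset (Finset.subset_univ ({i, j} : Finset (Fin d)))
        (by intro m _ hm; simp only [Finset.mem_insert, Finset.mem_singleton] at hm
            rw [if_neg]; tauto)]
      rw [Finset.prod_pair hij]
      simp [signVec_apply]
    simp only [key]
    have h2 := Finset.prod_univ_sum (κ := fun _ : Fin d => Bool)
      (t := fun _ : Fin d => (Finset.univ : Finset Bool))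
      (f := fun m b => if m = i ∨ m = j then (if b then (1:ℝ) else -1) else 1)
    rw [Fintype.piFinset_univ] at h2
    rw [← h2]
    apply Finset.prod_eq_zero (Finset.mem_univ i)
    simp

open scoped RealInnerProductSpace

lemma inner_signVec {d : ℕ} (g : EuclideanSpace ℝ (Fin d)) (s : Fin d → Bool) :
    ⟪g, signVec d s⟫ = ∑ i, g i * signVec d s i := by
  rw [PiLp.inner_apply]; simp [mul_comm]

lemma norm_signVec_sq (d : ℕ) (s : Fin d → Bool) :
    ‖signVec d s‖ ^ 2 = (d : ℝ) := by
  rw [← real_inner_self_eq_norm_sq, PiLp.inner_apply]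
  simp [sq, signVec_sq]

lemma sum_inner_sq {d : ℕ} (g : EuclideanSpace ℝ (Fin d)) :
    ∑ s : Fin d → Bool, ⟪g, signVec d s⟫ ^ 2 = 2 ^ d * ‖g‖ ^ 2 := by
  have hg : ‖g‖ ^ 2 = ∑ i, g i * g i := by
    rw [← real_inner_self_eq_norm_sq, PiLp.inner_apply]; simp [sq]
  simp only [inner_signVec, sq, Finset.sum_mul_sum]
  rw [Finset.sum_comm]
  have : ∀ i : Fin d, ∑ s : Fin d → Bool, ∑ j : Fin d,
      (g i * signVec d s i) * (g j * signVec d s j)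
      = 2 ^ d * (g i * g i) := by
    intro i
    rw [Finset.sum_comm]
    have : ∀ j : Fin d, ∑ s : Fin d → Bool,
        (g i * signVec d s i) * (g j * signVec d s j)
        = g i * g j * (if i = j then (2:ℝ)^d else 0) := by
      intro j
      rw [← sum_sign_mul d i j, Finset.mul_sum]
      congr 1; ext s; ring
    simp only [this]
    simp [mul_ite, mul_zero]
    ring
  rw [Finset.sum_congr rfl (fun i _ => this i), ← Finset.mul_sum, ← hg]
  ring

lemma sum_h_eq {d : ℕ} (g : EuclideanSpace ℝ (Fin d)) :
    ∑ s : Fin d → Bool, (⟪g, signVec d s⟫ • signVec d s : EuclideanSpace ℝ (Fin d))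
      = (2 ^ d : ℝ) • g := by
  refine PiLp.ext fun i => ?_
  rw [WithLp.ofLp_sum, Finset.sum_apply]
  simp only [PiLp.smul_apply, smul_eq_mul, inner_signVec]
  have : ∀ s : Fin d → Bool, (∑ j, g j * signVec d s j) * signVec d s i
      = ∑ j, g j * (signVec d s i * signVec d s j) := by
    intro s; rw [Finset.sum_mul]; congr 1; ext j; ring
  simp only [this]
  rw [Finset.sum_comm]
  have : ∀ j : Fin d, ∑ s : Fin d → Bool, g j * (signVec d s i * signVec d s j)
      = g j * (if i = j then (2:ℝ)^d else 0) := by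
    intro j; rw [← sum_sign_mul d i j, Finset.mul_sum]
  simp only [this]
  simp [mul_ite, mul_zero, mul_comm]


lemma variance_sum {E : Type*} [NormedAddCommGroup E] [InnerProductSpace ℝ E]
    {S : Type*} [Fintype S] (Z : S → E) (hZ : ∑ s, Z s = 0) (K : ℕ) :
    ∑ t : Fin (K + 1) → S, ‖∑ k, Z (t k)‖ ^ 2
      = (K + 1 : ℝ) * (Fintype.card S : ℝ) ^ K * ∑ s, ‖Z s‖ ^ 2 := by
  induction K with
  | zero =>
    have e := Equiv.sum_comp (Fin.consEquiv fun _ : Fin 1 => S)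
      (fun t : Fin 1 → S => ‖∑ k, Z (t k)‖ ^ 2)
    rw [← e]
    simp [Fin.consEquiv, Fintype.sum_prod_type]
  | succ K ih =>
    have e := Equiv.sum_comp (Fin.consEquiv fun _ : Fin (K + 2) => S)
      (fun t : Fin (K + 2) → S => ‖∑ k, Z (t k)‖ ^ 2)
    rw [← e]
    have expand : ∀ (s : S) (t : Fin (K + 1) → S),
        (‖∑ k : Fin (K + 2), Z (Fin.cons (α := fun _ => S) s t k)‖ ^ 2 : ℝ)
          = ‖Z s‖ ^ 2 + 2 * ⟪Z s, ∑ k, Z (t k)⟫ + ‖∑ k, Z (t k)‖ ^ 2 := by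
      intro s t
      rw [Fin.sum_univ_succ]
      simp only [Fin.cons_zero, Fin.cons_succ]
      exact norm_add_sq_real _ _
    have : (∑ p : S × (Fin (K + 1) → S),
          ‖∑ k, Z ((Fin.consEquiv fun _ => S) p k)‖ ^ 2)
        = ∑ s : S, ∑ t : Fin (K + 1) → S,
            (‖Z s‖ ^ 2 + 2 * ⟪Z s, ∑ k, Z (t k)⟫ + ‖∑ k, Z (t k)‖ ^ 2) := by
      rw [Fintype.sum_prod_type]
      exact Finset.sum_congr rfl fun s _ => Finset.sum_congr rfl fun t _ => expand s t
    rw [this]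
    have card_fun : (Fintype.card (Fin (K + 1) → S) : ℝ) = (Fintype.card S : ℝ) ^ (K + 1) := by
      simp [Fintype.card_fun]
    simp only [Finset.sum_add_distrib, Finset.sum_const, nsmul_eq_mul, ← Finset.mul_sum]
    have hcross : ∀ t : Fin (K + 1) → S, ∑ s : S, (2 * ⟪Z s, ∑ k, Z (t k)⟫) = 0 := by
      intro t
      rw [← Finset.mul_sum, ← sum_inner, hZ, inner_zero_left, mul_zero]
    have hc2 : ∑ i : S, ∑ t : Fin (K + 1) → S, ⟪Z i, ∑ k, Z (t k)⟫ = 0 := by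
      rw [Finset.sum_comm]
      have : ∀ t : Fin (K + 1) → S, ∑ i : S, ⟪Z i, ∑ k, Z (t k)⟫ = 0 := by
        intro t; rw [← sum_inner, hZ, inner_zero_left]
      simp [this]
    rw [hc2, mul_zero, add_zero, ih]
    simp only [Finset.card_univ, Fintype.card_fun, Fintype.card_fin]
    push_cast
    ring


variable {E : Type*} [NormedAddCommGroup E] [InnerProductSpace ℝ E] [CompleteSpace E]

lemma inner_gradient_eq (G : E → ℝ) (z v : E) :
    ⟪gradient G z, v⟫ = fderiv ℝ G z v := by
  rw [gradient, InnerProductSpace.toDual_symm_apply]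

lemma taylor_sym (G : E → ℝ) (L δ : ℝ) (hδ : 0 < δ)
    (hdiff : Differentiable ℝ G)
    (hlip : ∀ a b, ‖gradient G a - gradient G b‖ ≤ L * ‖a - b‖) (y r : E) :
    |G (y + δ • r) - G (y - δ • r) - 2 * δ * ⟪gradient G y, r⟫| ≤ L * δ ^ 2 * ‖r‖ ^ 2 := by
  set g := gradient G y with hg
  set φ : ℝ → ℝ := fun t => G (y + t • r) - G (y - t • r) - 2 * t * ⟪g, r⟫ with hφ
  have hderiv : ∀ t : ℝ, HasDerivAt φ
      (fderiv ℝ G (y + t • r) r + fderiv ℝ G (y - t • r) r - 2 * ⟪g, r⟫) t := by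
    intro t
    have hu : HasDerivAt (fun t : ℝ => y + t • r) r t := by
      simpa using ((hasDerivAt_id t).smul_const r).const_add y
    have hv : HasDerivAt (fun t : ℝ => y - t • r) (-r) t := by
      simpa using ((hasDerivAt_id t).smul_const r).const_sub y
    have h1 : HasDerivAt (fun t : ℝ => G (y + t • r)) (fderiv ℝ G (y + t • r) r) t :=
      (hdiff (y + t • r)).hasFDerivAt.comp_hasDerivAt t hu
    have h2 : HasDerivAt (fun t : ℝ => G (y - t • r)) (fderiv ℝ G (y - t • r) (-r)) t :=
      (hdiff (y - t • r)).hasFDerivAt.comp_hasDerivAt t hv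
    have h3 : HasDerivAt (fun t : ℝ => 2 * t * ⟪g, r⟫) (2 * ⟪g, r⟫) t := by
      have h := ((hasDerivAt_id t).const_mul (2:ℝ)).mul_const ⟪g, r⟫
      simpa using h.congr_deriv (by ring)
    have := (h1.sub h2).sub h3
    simp only [map_neg, sub_neg_eq_add] at this; exact this
  have hbound : ∀ t ∈ Set.Ico (0:ℝ) δ,
      ‖fderiv ℝ G (y + t • r) r + fderiv ℝ G (y - t • r) r - 2 * ⟪g, r⟫‖
        ≤ 2 * L * ‖r‖ ^ 2 * t := by
    intro t ht
    have h1 : fderiv ℝ G (y + t • r) r - ⟪g, r⟫ = ⟪gradient G (y + t • r) - g, r⟫ := by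
      rw [inner_sub_left]; simp [hg, inner_gradient_eq]
    have h2 : fderiv ℝ G (y - t • r) r - ⟪g, r⟫ = ⟪gradient G (y - t • r) - g, r⟫ := by
      rw [inner_sub_left]; simp [hg, inner_gradient_eq]
    have e1 : |⟪gradient G (y + t • r) - g, r⟫| ≤ (L * (t * ‖r‖)) * ‖r‖ := by
      refine (abs_real_inner_le_norm _ _).trans (mul_le_mul_of_nonneg_right ?_ (norm_nonneg r))
      refine (hlip _ _).trans ?_
      simp [norm_smul, abs_of_nonneg ht.1]
    have e2 : |⟪gradient G (y - t • r) - g, r⟫| ≤ (L * (t * ‖r‖)) * ‖r‖ := by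
      refine (abs_real_inner_le_norm _ _).trans (mul_le_mul_of_nonneg_right ?_ (norm_nonneg r))
      refine (hlip _ _).trans ?_
      simp [norm_smul, abs_of_nonneg ht.1]
    have : fderiv ℝ G (y + t • r) r + fderiv ℝ G (y - t • r) r - 2 * ⟪g, r⟫
        = ⟪gradient G (y + t • r) - g, r⟫ + ⟪gradient G (y - t • r) - g, r⟫ := by
      rw [← h1, ← h2]; ring
    rw [Real.norm_eq_abs, this]
    calc |⟪gradient G (y + t • r) - g, r⟫ + ⟪gradient G (y - t • r) - g, r⟫|
        ≤ |⟪gradient G (y + t • r) - g, r⟫| + |⟪gradient G (y - t • r) - g, r⟫| := abs_add_le _ _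
      _ ≤ (L * (t * ‖r‖)) * ‖r‖ + (L * (t * ‖r‖)) * ‖r‖ := add_le_add e1 e2
      _ = 2 * L * ‖r‖ ^ 2 * t := by ring
  have key := image_norm_le_of_norm_deriv_right_le_deriv_boundary
    (f := φ) (f' := fun t => fderiv ℝ G (y + t • r) r + fderiv ℝ G (y - t • r) r - 2 * ⟪g, r⟫)
    (a := 0) (b := δ)
    (fun t _ => (hderiv t).continuousAt.continuousWithinAt)
    (fun t _ => (hderiv t).hasDerivWithinAt.mono (Set.Ici_subset_Ici.mpr le_rfl) )
    (B := fun t => L * ‖r‖ ^ 2 * t ^ 2) (B' := fun t => 2 * L * ‖r‖ ^ 2 * t)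
    (by simp [hφ])
    (fun t => ((hasDerivAt_pow 2 t).const_mul (L * ‖r‖ ^ 2)).congr_deriv (by push_cast; ring))
    hbound
  have := key (Set.right_mem_Icc.mpr hδ.le)
  rw [Real.norm_eq_abs] at this
  calc |G (y + δ • r) - G (y - δ • r) - 2 * δ * ⟪gradient G y, r⟫| = |φ δ| := by rw [hφ]
    _ ≤ L * ‖r‖ ^ 2 * δ ^ 2 := this
    _ = L * δ ^ 2 * ‖r‖ ^ 2 := by ring


lemma abstract_bound {E : Type*} [NormedAddCommGroup E] [InnerProductSpace ℝ E]
    {S : Type*} [Fintype S] [Nonempty S] (Z w : S → E) (hZ : ∑ s, Z s = 0)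
    (c : ℝ) (hw : ∀ s, ‖w s‖ ≤ c) (K' : ℕ) :
    (((Fintype.card S : ℝ)) ^ (K' + 1))⁻¹ *
        ∑ t : Fin (K' + 1) → S, ‖((K' + 1 : ℕ) : ℝ)⁻¹ • ∑ k, (Z (t k) + w (t k))‖ ^ 2
      ≤ 2 * ((K' + 1 : ℕ) : ℝ)⁻¹ * (Fintype.card S : ℝ)⁻¹ * (∑ s, ‖Z s‖ ^ 2) + 2 * c ^ 2 := by
  have hKpos : (0:ℝ) < ((K' + 1 : ℕ) : ℝ) := by positivity
  have hc : 0 ≤ c := le_trans (norm_nonneg (w (Classical.arbitrary S))) (hw _)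
  have hn : (0:ℝ) < (Fintype.card S : ℝ) := by
    exact_mod_cast Nat.cast_pos.mpr Fintype.card_pos
  have pointwise : ∀ t : Fin (K' + 1) → S,
      ‖((K' + 1 : ℕ) : ℝ)⁻¹ • ∑ k, (Z (t k) + w (t k))‖ ^ 2
        ≤ 2 * (((K' + 1 : ℕ) : ℝ)⁻¹ ^ 2 * ‖∑ k, Z (t k)‖ ^ 2) + 2 * c ^ 2 := by
    intro t
    set u := ((K' + 1 : ℕ) : ℝ)⁻¹ • ∑ k, Z (t k) with hu
    set v := ((K' + 1 : ℕ) : ℝ)⁻¹ • ∑ k, w (t k) with hv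
    have hsplit : ((K' + 1 : ℕ) : ℝ)⁻¹ • ∑ k, (Z (t k) + w (t k)) = u + v := by
      rw [hu, hv, ← smul_add, Finset.sum_add_distrib]
    have hvnorm : ‖v‖ ≤ c := by
      rw [hv, norm_smul, Real.norm_eq_abs, abs_of_nonneg (by positivity)]
      have h1 : ‖∑ k : Fin (K' + 1), w (t k)‖ ≤ ((K' + 1 : ℕ) : ℝ) * c := by
        refine (norm_sum_le _ _).trans ?_
        calc ∑ k : Fin (K' + 1), ‖w (t k)‖ ≤ ∑ _k : Fin (K' + 1), c :=
              Finset.sum_le_sum fun k _ => hw (t k)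
          _ = ((K' + 1 : ℕ) : ℝ) * c := by simp [mul_comm]
      calc ((K' + 1 : ℕ) : ℝ)⁻¹ * ‖∑ k : Fin (K' + 1), w (t k)‖
          ≤ ((K' + 1 : ℕ) : ℝ)⁻¹ * (((K' + 1 : ℕ) : ℝ) * c) :=
            mul_le_mul_of_nonneg_left h1 (by positivity)
        _ = c := by field_simp
    have hunorm : ‖u‖ = ((K' + 1 : ℕ) : ℝ)⁻¹ * ‖∑ k, Z (t k)‖ := by
      rw [hu, norm_smul, Real.norm_eq_abs, abs_of_nonneg (by positivity)]
    rw [hsplit]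
    have htri : ‖u + v‖ ≤ ‖u‖ + ‖v‖ := norm_add_le u v
    have h2 : ‖u + v‖ ^ 2 ≤ (‖u‖ + ‖v‖) ^ 2 := by
      apply pow_le_pow_left₀ (norm_nonneg _) htri
    have h3 : (‖u‖ + ‖v‖) ^ 2 ≤ 2 * ‖u‖ ^ 2 + 2 * ‖v‖ ^ 2 := by
      nlinarith [sq_nonneg (‖u‖ - ‖v‖)]
    have h4 : ‖v‖ ^ 2 ≤ c ^ 2 := by
      apply pow_le_pow_left₀ (norm_nonneg _) hvnorm
    have h5 : ‖u‖ ^ 2 = ((K' + 1 : ℕ) : ℝ)⁻¹ ^ 2 * ‖∑ k, Z (t k)‖ ^ 2 := by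
      rw [hunorm]; ring
    linarith [h2, h3, h4]
  calc (((Fintype.card S : ℝ)) ^ (K' + 1))⁻¹ *
        ∑ t : Fin (K' + 1) → S, ‖((K' + 1 : ℕ) : ℝ)⁻¹ • ∑ k, (Z (t k) + w (t k))‖ ^ 2
      ≤ (((Fintype.card S : ℝ)) ^ (K' + 1))⁻¹ *
        ∑ t : Fin (K' + 1) → S,
          (2 * (((K' + 1 : ℕ) : ℝ)⁻¹ ^ 2 * ‖∑ k, Z (t k)‖ ^ 2) + 2 * c ^ 2) :=
        mul_le_mul_of_nonneg_left (Finset.sum_le_sum fun t _ => pointwise t) (by positivity)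
    _ = 2 * ((K' + 1 : ℕ) : ℝ)⁻¹ * (Fintype.card S : ℝ)⁻¹ * (∑ s, ‖Z s‖ ^ 2) + 2 * c ^ 2 := by
        rw [Finset.sum_add_distrib, Finset.sum_const, Finset.card_univ]
        simp only [← Finset.mul_sum]
        rw [variance_sum Z hZ K']
        have hcard : (Fintype.card (Fin (K' + 1) → S) : ℝ) = (Fintype.card S : ℝ) ^ (K' + 1) := by
          simp [Fintype.card_fun]
        rw [nsmul_eq_mul, hcard]
        have hKcast : ((K' + 1 : ℕ) : ℝ) = (K' : ℝ) + 1 := by push_cast; ring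
        rw [hKcast]
        have hne : ((K' : ℝ) + 1) ≠ 0 := by positivity
        have hnne : (Fintype.card S : ℝ) ≠ 0 := ne_of_gt hn
        field_simp
        ring

lemma sum_Z_sq {d : ℕ} (g : EuclideanSpace ℝ (Fin d)) :
    ∑ s : Fin d → Bool, ‖(⟪g, signVec d s⟫ • signVec d s - g : EuclideanSpace ℝ (Fin d))‖ ^ 2
      = 2 ^ d * ((d : ℝ) - 1) * ‖g‖ ^ 2 := by
  have expand : ∀ s : Fin d → Bool,
      ‖(⟪g, signVec d s⟫ • signVec d s - g : EuclideanSpace ℝ (Fin d))‖ ^ 2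
        = (d : ℝ) * ⟪g, signVec d s⟫ ^ 2 - 2 * ⟪g, signVec d s⟫ ^ 2 + ‖g‖ ^ 2 := by
    intro s
    rw [norm_sub_sq_real]
    have h1 : ‖(⟪g, signVec d s⟫ • signVec d s : EuclideanSpace ℝ (Fin d))‖ ^ 2
        = ⟪g, signVec d s⟫ ^ 2 * ‖signVec d s‖ ^ 2 := by
      rw [norm_smul, mul_pow, Real.norm_eq_abs, sq_abs]
    have h2 : ⟪(⟪g, signVec d s⟫ • signVec d s : EuclideanSpace ℝ (Fin d)), g⟫
        = ⟪g, signVec d s⟫ ^ 2 := by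
      rw [real_inner_smul_left, real_inner_comm]; ring
    rw [h1, h2, norm_signVec_sq]
    ring
  rw [Finset.sum_congr rfl fun s _ => expand s]
  rw [Finset.sum_add_distrib, Finset.sum_sub_distrib, Finset.sum_const, Finset.card_univ,
    ← Finset.mul_sum, ← Finset.mul_sum, sum_inner_sq]
  have : (Fintype.card (Fin d → Bool) : ℝ) = 2 ^ d := by
    simp [Fintype.card_fun]
  rw [nsmul_eq_mul, this]
  ring

/-- **Continuous Rademacher finite-difference error budget.**
If `G` has an `L`-Lipschitz gradient on `ℝ^d`, then the uniform average over all
`2^{dK}` tuples of `K` Rademacher directions of the squared error of the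
`K`-direction two-point estimator with radius `δ` is at most
`2((d-1)/K)‖∇G(y)‖² + L²δ²d³/2`. -/
theorem stmt_11 (d K : ℕ) (hK : 1 ≤ K) (G : EuclideanSpace ℝ (Fin d) → ℝ)
    (L δ : ℝ) (hδ : 0 < δ) (hdiff : Differentiable ℝ G)
    (hlip : ∀ a b, ‖gradient G a - gradient G b‖ ≤ L * ‖a - b‖)
    (y : EuclideanSpace ℝ (Fin d)) :
    ((2 : ℝ) ^ (d * K))⁻¹ *
        ∑ t : Fin K → Fin d → Bool,
          ‖(K : ℝ)⁻¹ •
              (∑ k : Fin K,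
                ((G (y + δ • signVec d (t k)) - G (y - δ • signVec d (t k))) /
                    (2 * δ)) • signVec d (t k)) -
            gradient G y‖ ^ 2 ≤
      2 * (((d : ℝ) - 1) / (K : ℝ)) * ‖gradient G y‖ ^ 2 +
        L ^ 2 * δ ^ 2 * (d : ℝ) ^ 3 / 2 := by
  obtain ⟨K', rfl⟩ : ∃ K', K = K' + 1 := ⟨K - 1, (Nat.succ_pred_eq_of_pos hK).symm⟩
  set g := gradient G y with hgdef
  set Z : (Fin d → Bool) → EuclideanSpace ℝ (Fin d) :=
    fun s => ⟪g, signVec d s⟫ • signVec d s - g with hZdef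
  set w : (Fin d → Bool) → EuclideanSpace ℝ (Fin d) :=
    fun s => ((G (y + δ • signVec d s) - G (y - δ • signVec d s)) / (2 * δ)
        - ⟪g, signVec d s⟫) • signVec d s with hwdef
  set c : ℝ := L * δ * (d : ℝ) / 2 * Real.sqrt d with hcdef
  -- the sign vectors have norm √d
  have hrnorm : ∀ s : Fin d → Bool, ‖signVec d s‖ = Real.sqrt d := by
    intro s
    rw [← Real.sqrt_sq (norm_nonneg (signVec d s)), norm_signVec_sq]
  -- Z sums to zero
  have hZ : ∑ s : Fin d → Bool, Z s = 0 := by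
    rw [hZdef]
    rw [Finset.sum_sub_distrib, sum_h_eq, Finset.sum_const, Finset.card_univ]
    have : ((2 : ℝ) ^ d) • g = (Fintype.card (Fin d → Bool)) • g := by
      rw [← Nat.cast_smul_eq_nsmul ℝ]
      congr 1
      simp [Fintype.card_fun]
    rw [this, sub_self]
  -- bound on w
  have hw : ∀ s : Fin d → Bool, ‖w s‖ ≤ c := by
    intro s
    have htay := taylor_sym G L δ hδ hdiff hlip y (signVec d s)
    rw [norm_signVec_sq] at htay
    have he : |(G (y + δ • signVec d s) - G (y - δ • signVec d s)) / (2 * δ)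
        - ⟪g, signVec d s⟫| ≤ L * δ * (d : ℝ) / 2 := by
      have heq : (G (y + δ • signVec d s) - G (y - δ • signVec d s)) / (2 * δ)
          - ⟪g, signVec d s⟫
          = (G (y + δ • signVec d s) - G (y - δ • signVec d s)
              - 2 * δ * ⟪g, signVec d s⟫) / (2 * δ) := by
        field_simp
      rw [heq, abs_div, abs_of_pos (by positivity : (0:ℝ) < 2 * δ)]
      rw [div_le_iff₀ (by positivity : (0:ℝ) < 2 * δ)]
      calc |G (y + δ • signVec d s) - G (y - δ • signVec d s) - 2 * δ * ⟪g, signVec d s⟫|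
          ≤ L * δ ^ 2 * (d : ℝ) := htay
        _ = L * δ * (d : ℝ) / 2 * (2 * δ) := by ring
    rw [hwdef]
    simp only
    rw [norm_smul, Real.norm_eq_abs, hrnorm s, hcdef]
    exact mul_le_mul_of_nonneg_right he (Real.sqrt_nonneg _)
  -- rewrite the estimator in terms of Z and w
  have hpt : ∀ t : Fin (K' + 1) → Fin d → Bool,
      ((K' + 1 : ℕ) : ℝ)⁻¹ •
          (∑ k : Fin (K' + 1),
            ((G (y + δ • signVec d (t k)) - G (y - δ • signVec d (t k))) /
                (2 * δ)) • signVec d (t k)) - g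
        = ((K' + 1 : ℕ) : ℝ)⁻¹ • ∑ k, (Z (t k) + w (t k)) := by
    intro t
    have h1 : ∀ s : Fin d → Bool, Z s + w s
        = ((G (y + δ • signVec d s) - G (y - δ • signVec d s)) / (2 * δ)) • signVec d s - g := by
      intro s
      rw [hZdef, hwdef]
      simp only
      rw [sub_smul]
      abel
    rw [Finset.sum_congr rfl fun k _ => h1 (t k), Finset.sum_sub_distrib, Finset.sum_const,
      Finset.card_univ, Fintype.card_fin, smul_sub]
    have h2 : ((K' + 1 : ℕ) : ℝ)⁻¹ • ((K' + 1) • g) = g := by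
      rw [← Nat.cast_smul_eq_nsmul ℝ, smul_smul, inv_mul_cancel₀ (by positivity), one_smul]
    rw [h2]
  -- apply the abstract bound
  have habs := abstract_bound Z w hZ c hw K'
  have hcardS : (Fintype.card (Fin d → Bool) : ℝ) = 2 ^ d := by
    simp [Fintype.card_fun]
  have hpow : ((2 : ℝ) ^ (d * (K' + 1)))⁻¹ = (((Fintype.card (Fin d → Bool) : ℝ)) ^ (K' + 1))⁻¹ := by
    rw [hcardS, ← pow_mul]
  rw [hpow]
  rw [Finset.sum_congr rfl fun t _ => congrArg (fun x => x ^ 2) (congrArg norm (hpt t))]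
  refine habs.trans (le_of_eq ?_)
  rw [sum_Z_sq, hcardS]
  have hsq : c ^ 2 = (L * δ * (d : ℝ) / 2) ^ 2 * (d : ℝ) := by
    rw [hcdef, mul_pow, Real.sq_sqrt (by positivity)]
  rw [hsq]
  have h2d : ((2 : ℝ) ^ d) ≠ 0 := by positivity
  have hKne : ((K' + 1 : ℕ) : ℝ) ≠ 0 := by positivity
  field_simp
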